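/- Assume in addition that k is algebraically closed. Then F is divisible by p_{n+1} − p_{n+2}, and the quotient polynomial G = F / (p_{n+1} − p_{n+2}) ∈ k[p_1, …, p_{n+2}] is irreducible. -/

import Mathlib

section PolyHelpers

open Polynomial IntermediateField

lemma field_core {K : Type*} [Field K] {u v x y : K} {m : ℕ}
    (hm : m ≠ 0) (hxy : x ≠ y) (hu : u ≠ 0) (hv : v ≠ 0) (huv : u ≠ v)
    (hirr : Irreducible (X ^ m - C (v / u) : K[X])) :
    Irreducible (C u * (X - C x) ^ m - C v * (X - C y) ^ m : K[X]) := by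
  classical
  set Q : K[X] := C u * (X - C x) ^ m - C v * (X - C y) ^ m with hQdef
  have hcoeff_top : ∀ w : K, ((X - C w : K[X]) ^ m).coeff m = 1 := by
    intro w
    have h : (X - C w : K[X]) ^ m = (X + C (-w)) ^ m := by rw [map_neg, sub_eq_add_neg]
    rw [h, coeff_X_add_C_pow]
    simp
  have hcm : Q.coeff m = u - v := by
    rw [hQdef, coeff_sub, coeff_C_mul, coeff_C_mul, hcoeff_top x, hcoeff_top y]
    ring
  have hQne : Q ≠ 0 := by
    intro h0
    rw [h0, coeff_zero] at hcm
    exact huv (sub_eq_zero.mp hcm.symm)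
  have hQdeg : Q.natDegree = m := by
    have hle : Q.natDegree ≤ m := by
      refine le_trans (natDegree_sub_le _ _) ?_
      have h1 : (C u * (X - C x) ^ m).natDegree ≤ m := by
        refine le_trans (natDegree_C_mul_le _ _) ?_
        rw [natDegree_pow, natDegree_X_sub_C, mul_one]
      have h2 : (C v * (X - C y) ^ m).natDegree ≤ m := by
        refine le_trans (natDegree_C_mul_le _ _) ?_
        rw [natDegree_pow, natDegree_X_sub_C, mul_one]
      omega
    exact le_antisymm hle (le_natDegree_of_ne_zero (hcm ▸ sub_ne_zero.mpr huv))
  have hQdeg0 : Q.degree ≠ 0 := by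
    rw [degree_eq_natDegree hQne, hQdeg]
    exact_mod_cast hm
  obtain ⟨θ, hθ⟩ := IsAlgClosed.exists_aeval_eq_zero (AlgebraicClosure K) Q hQdeg0
  have hinj : Function.Injective (algebraMap K (AlgebraicClosure K)) :=
    (algebraMap K (AlgebraicClosure K)).injective
  have hE : algebraMap K (AlgebraicClosure K) u * (θ - algebraMap K (AlgebraicClosure K) x) ^ m
      = algebraMap K (AlgebraicClosure K) v * (θ - algebraMap K (AlgebraicClosure K) y) ^ m := by
    have h := hθ
    rw [hQdef] at h
    simp only [map_sub, map_mul, map_pow, aeval_C, aeval_X] at h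
    exact sub_eq_zero.mp h
  have hu' : algebraMap K (AlgebraicClosure K) u ≠ 0 := fun h => hu (hinj (by rwa [map_zero]))
  have hv' : algebraMap K (AlgebraicClosure K) v ≠ 0 := fun h => hv (hinj (by rwa [map_zero]))
  have hxy' : algebraMap K (AlgebraicClosure K) x ≠ algebraMap K (AlgebraicClosure K) y :=
    fun h => hxy (hinj h)
  have hθy : θ - algebraMap K (AlgebraicClosure K) y ≠ 0 := by
    intro h0
    have hθx : θ = algebraMap K (AlgebraicClosure K) y := sub_eq_zero.mp h0
    rw [h0, zero_pow hm, mul_zero, hθx] at hE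
    exact (mul_ne_zero hu' (pow_ne_zero _ (sub_ne_zero.mpr hxy'.symm))) hE
  set τ : AlgebraicClosure K :=
    (θ - algebraMap K (AlgebraicClosure K) x) / (θ - algebraMap K (AlgebraicClosure K) y) with hτdef
  have hτm : τ ^ m = algebraMap K (AlgebraicClosure K) (v / u) := by
    rw [map_div₀, hτdef, div_pow, div_eq_div_iff (pow_ne_zero _ hθy) hu']
    linear_combination hE
  have hτ1 : τ ≠ 1 := by
    intro h1
    rw [hτdef, div_eq_one_iff_eq hθy] at h1
    exact hxy' (by linear_combination -h1)
  have hτroot : (Polynomial.aeval τ) (X ^ m - C (v / u) : K[X]) = 0 := by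
    rw [map_sub, map_pow, aeval_X, aeval_C, hτm, sub_self]
  have hτint : IsIntegral K τ :=
    ⟨X ^ m - C (v / u), monic_X_pow_sub_C _ hm, by rw [← aeval_def]; exact hτroot⟩
  have hmin : minpoly K τ = X ^ m - C (v / u) :=
    (minpoly.eq_of_irreducible_of_monic hirr hτroot (monic_X_pow_sub_C _ hm)).symm
  have hfinτ : Module.finrank K K⟮τ⟯ = m := by
    rw [IntermediateField.adjoin.finrank hτint, hmin, natDegree_X_pow_sub_C]
  have hθint : IsIntegral K θ := (isAlgebraic_iff_isIntegral.mp ⟨Q, hQne, hθ⟩)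
  have hmemτ : τ ∈ K⟮θ⟯ := by
    have hθmem : θ ∈ K⟮θ⟯ := IntermediateField.mem_adjoin_simple_self K θ
    exact div_mem (sub_mem hθmem (IntermediateField.algebraMap_mem _ x))
      (sub_mem hθmem (IntermediateField.algebraMap_mem _ y))
  have hmemθ : θ ∈ K⟮τ⟯ := by
    have hτmem : τ ∈ K⟮τ⟯ := IntermediateField.mem_adjoin_simple_self K τ
    have hτ1' : τ - 1 ≠ 0 := sub_ne_zero.mpr hτ1
    have hrepr : θ = (τ * algebraMap K (AlgebraicClosure K) y
        - algebraMap K (AlgebraicClosure K) x) / (τ - 1) := by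
      rw [eq_div_iff hτ1']
      have hmul : τ * (θ - algebraMap K (AlgebraicClosure K) y)
          = θ - algebraMap K (AlgebraicClosure K) x := by
        rw [hτdef, div_mul_cancel₀ _ hθy]
      linear_combination hmul
    rw [hrepr]
    exact div_mem (sub_mem (mul_mem hτmem (IntermediateField.algebraMap_mem _ y))
      (IntermediateField.algebraMap_mem _ x)) (sub_mem hτmem (one_mem _))
  have heqKK : K⟮θ⟯ = K⟮τ⟯ :=
    le_antisymm (IntermediateField.adjoin_simple_le_iff.mpr hmemθ)
      (IntermediateField.adjoin_simple_le_iff.mpr hmemτ)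
  have hfinθ : (minpoly K θ).natDegree = m := by
    have h1 := IntermediateField.adjoin.finrank hθint
    rw [heqKK, hfinτ] at h1
    exact h1.symm
  have hdvd : minpoly K θ ∣ Q := minpoly.dvd K θ hθ
  obtain ⟨c, hc⟩ := hdvd
  have hminne : minpoly K θ ≠ 0 := minpoly.ne_zero hθint
  have hcne : c ≠ 0 := by
    rintro rfl
    rw [mul_zero] at hc
    exact hQne hc
  have hdeg2 : Q.natDegree = (minpoly K θ).natDegree + c.natDegree := by
    rw [hc, natDegree_mul hminne hcne]
  have hc0 : c.natDegree = 0 := by omega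
  have hcunit : IsUnit c := by
    rw [Polynomial.eq_C_of_natDegree_eq_zero hc0]
    refine Polynomial.isUnit_C.mpr (isUnit_iff_ne_zero.mpr ?_)
    intro h
    exact hcne (by rw [Polynomial.eq_C_of_natDegree_eq_zero hc0, h, map_zero])
  have hassoc : Associated (minpoly K θ) Q := ⟨hcunit.unit, by rw [IsUnit.unit_spec, ← hc]⟩
  exact hassoc.irreducible (minpoly.irreducible hθint)

lemma core_lemma {B : Type*} [CommRing B] [IsDomain B] [UniqueFactorizationMonoid B]
    {u v x y : B} {m : ℕ} {G : B[X]}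
    (hD0 : x - y ≠ 0) (hu : u ≠ 0) (hv : v ≠ 0) (huv : u ≠ v)
    (hm : m ≠ 0) (hmunit : IsUnit (m : B)) (hodd : Odd m)
    (hcop : ∀ q : B, q ∣ u → q ∣ v → IsUnit q)
    (hpow : ∀ p : ℕ, p.Prime → p ∣ m → ∀ s t : B, t ≠ 0 → s ^ p * u ≠ t ^ p * v)
    (hF : C (x - y) * G = C u * (X - C x) ^ m - C v * (X - C y) ^ m) :
    Irreducible G := by
  classical
  letI : NormalizationMonoid B := UniqueFactorizationMonoid.normalizationMonoid.toNormalizationMonoid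
  letI : NormalizedGCDMonoid B := UniqueFactorizationMonoid.toNormalizedGCDMonoid B
  have hm1 : 1 ≤ m := Nat.one_le_iff_ne_zero.mpr hm
  -- coefficients of the right-hand side
  have hcoeff_top : ∀ w : B, ((X - C w : B[X]) ^ m).coeff m = 1 := by
    intro w
    have h : (X - C w : B[X]) ^ m = (X + C (-w)) ^ m := by rw [map_neg, sub_eq_add_neg]
    rw [h, coeff_X_add_C_pow]
    simp
  have hcoeff_next : ∀ w : B, ((X - C w : B[X]) ^ m).coeff (m - 1) = -w * m := by
    intro w
    have h : (X - C w : B[X]) ^ m = (X + C (-w)) ^ m := by rw [map_neg, sub_eq_add_neg]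
    rw [h, coeff_X_add_C_pow]
    rw [Nat.sub_sub_self hm1, pow_one]
    congr 1
    rw [← Nat.choose_symm (Nat.sub_le m 1), Nat.sub_sub_self hm1, Nat.choose_one_right]
  -- primitivity
  have hprim : G.IsPrimitive := by
    intro r hr
    obtain ⟨G₁, hG₁⟩ := hr
    have hrd : C (r * (x - y)) ∣ C u * (X - C x) ^ m - C v * (X - C y) ^ m :=
      ⟨G₁, by rw [← hF, hG₁, map_mul]; ring⟩
    have h1 : r * (x - y) ∣ u - v := by
      have := (C_dvd_iff_dvd_coeff _ _).mp hrd m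
      rwa [coeff_sub, coeff_C_mul, coeff_C_mul, hcoeff_top, hcoeff_top, mul_one, mul_one] at this
    have h2 : r * (x - y) ∣ (m : B) * (u * x - v * y) := by
      have h := (C_dvd_iff_dvd_coeff _ _).mp hrd (m - 1)
      rw [coeff_sub, coeff_C_mul, coeff_C_mul, hcoeff_next, hcoeff_next] at h
      have he : u * (-x * m) - v * (-y * m) = -((m : B) * (u * x - v * y)) := by ring
      rw [he, dvd_neg] at h
      exact h
    have h2' : r * (x - y) ∣ u * x - v * y := by
      obtain ⟨mu, hmu⟩ := hmunit
      rw [← hmu] at h2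
      exact Units.dvd_mul_left.mp h2
    have hrv : r ∣ v := by
      have h3 : r * (x - y) ∣ v * (x - y) := by
        have he : v * (x - y) = (u * x - v * y) - x * (u - v) := by ring
        rw [he]
        exact dvd_sub h2' (h1.mul_left x)
      exact (mul_dvd_mul_iff_right hD0).mp h3
    have hru : r ∣ u := by
      have h3 : r * (x - y) ∣ u * (x - y) := by
        have he : u * (x - y) = (u * x - v * y) - y * (u - v) := by ring
        rw [he]
        exact dvd_sub h2' (h1.mul_left y)
      exact (mul_dvd_mul_iff_right hD0).mp h3
    exact hcop r hru hrv
  -- pass to the fraction field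
  set K := FractionRing B
  set f : B →+* K := algebraMap B K with hf
  have hfinj : Function.Injective f := IsFractionRing.injective B K
  rw [hprim.irreducible_iff_irreducible_map_fraction_map (K := K)]
  have hF' : C (f (x - y)) * (G.map f) = C (f u) * (X - C (f x)) ^ m - C (f v) * (X - C (f y)) ^ m := by
    have h := congrArg (Polynomial.map f) hF
    simpa only [Polynomial.map_mul, Polynomial.map_sub, Polynomial.map_pow, Polynomial.map_C,
      Polynomial.map_X] using h
  have hne0 : ∀ z : B, z ≠ 0 → f z ≠ 0 := fun z hz h => hz (hfinj (by rwa [map_zero]))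
  have hirrR : Irreducible (C (f u) * (X - C (f x)) ^ m - C (f v) * (X - C (f y)) ^ m : K[X]) := by
    refine field_core hm ?_ (hne0 u hu) (hne0 v hv) (fun h => huv (hfinj h)) ?_
    · exact fun h => hD0 (sub_eq_zero_of_eq (hfinj h))
    · refine X_pow_sub_C_irreducible_of_odd hodd ?_
      intro p hp hpm b hb
      obtain ⟨fs, ft, hft, hb'⟩ := IsFractionRing.div_surjective (A := B) b
      have hft0 : ft ≠ 0 := mem_nonZeroDivisors_iff_ne_zero.mp hft
      have hcross : f (fs ^ p * u) = f (ft ^ p * v) := by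
        rw [map_mul, map_mul, map_pow, map_pow]
        have hftK : f ft ≠ 0 := hne0 ft hft0
        have hfuK : f u ≠ 0 := hne0 u hu
        rw [← hb'] at hb
        rw [div_pow, div_eq_div_iff (pow_ne_zero _ hftK) hfuK] at hb
        linear_combination hb
      exact hpow p hp hpm fs ft hft0 (hfinj hcross)
  have hDunit : IsUnit (C (f (x - y)) : K[X]) :=
    Polynomial.isUnit_C.mpr (isUnit_iff_ne_zero.mpr (hne0 _ hD0))
  have hassoc : Associated (G.map f) (C (f (x - y)) * G.map f) :=
    ⟨hDunit.unit, by rw [IsUnit.unit_spec, mul_comm]⟩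
  rw [← hF'] at hirrR
  exact hassoc.symm.irreducible hirrR

end PolyHelpers

open MvPolynomial

/-- The Chen–Coskun polynomial
`F = ∏_{aᵢ>0}(p_{n+1}−pᵢ)^{aᵢ} ∏_{aᵢ<0}(p_{n+2}−pᵢ)^{−aᵢ}
   − ∏_{aᵢ<0}(p_{n+1}−pᵢ)^{−aᵢ} ∏_{aᵢ>0}(p_{n+2}−pᵢ)^{aᵢ}`
in `k[p₁,…,p_{n+2}]`. Variables are 0-indexed: `pᵢ = X (Fin.castAdd 2 i)` for
`i : Fin n`, `p_{n+1} = X ⟨n, _⟩`, `p_{n+2} = X ⟨n+1, _⟩`; the exponent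
`(a i).toNat` vanishes when `a i < 0` and `(-a i).toNat` vanishes when
`a i > 0`, so the products are exactly those of the paper. -/
noncomputable def Fpoly (k : Type*) [Field k] (n : ℕ) (a : Fin n → ℤ) :
    MvPolynomial (Fin (n + 2)) k :=
  (∏ i, (X (⟨n, by omega⟩ : Fin (n + 2)) - X (Fin.castAdd 2 i)) ^ (a i).toNat) *
      (∏ i, (X (⟨n + 1, by omega⟩ : Fin (n + 2)) - X (Fin.castAdd 2 i)) ^ (-a i).toNat) -
    (∏ i, (X (⟨n, by omega⟩ : Fin (n + 2)) - X (Fin.castAdd 2 i)) ^ (-a i).toNat) *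
      (∏ i, (X (⟨n + 1, by omega⟩ : Fin (n + 2)) - X (Fin.castAdd 2 i)) ^ (a i).toNat)

lemma assoc_lin {σ k : Type*} [Field k] {s t s' t' : σ} (hst' : s' ≠ t')
    (h : Associated (X s - X t : MvPolynomial σ k) (X s' - X t')) :
    (s = s' ∧ t = t') ∨ (s = t' ∧ t = s') := by
  classical
  obtain ⟨w, hw⟩ := h
  have key : ∀ c : σ, ∃ W : k, W ≠ 0 ∧
      ((if s = c then (1:k) else 0) - (if t = c then 1 else 0)) * W
      = (if s' = c then (1:k) else 0) - (if t' = c then 1 else 0) := by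
    intro c
    refine ⟨eval (fun i => if i = c then (1:k) else 0) (w : MvPolynomial σ k),
      ((w.isUnit.map (eval (fun i => if i = c then (1:k) else 0)))).ne_zero, ?_⟩
    have h2 : eval (fun i => if i = c then (1:k) else 0) ((X s - X t : MvPolynomial σ k) * w)
        = eval (fun i => if i = c then (1:k) else 0) (X s' - X t' : MvPolynomial σ k) := by
      rw [hw]
    simpa using h2
  obtain ⟨W1, hW1, h1⟩ := key s'
  obtain ⟨W2, hW2, h2⟩ := key t'
  rw [if_pos (rfl : s' = s'), if_neg (Ne.symm hst')] at h1
  rw [if_pos (rfl : t' = t'), if_neg hst'] at h2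
  by_cases hss' : s = s'
  · left
    refine ⟨hss', ?_⟩
    by_cases hts' : t = s'
    · exfalso
      rw [if_pos hss', if_pos hts'] at h1
      norm_num at h1
    · by_cases htt' : t = t'
      · exact htt'
      · exfalso
        have hst'2 : ¬ s = t' := by rw [hss']; exact hst'
        rw [if_neg hst'2, if_neg htt'] at h2
        norm_num at h2
  · have hts' : t = s' := by
      by_contra hts'
      rw [if_neg hss', if_neg hts'] at h1
      norm_num at h1
    right
    have htt' : ¬ t = t' := by rw [hts']; exact hst'
    by_cases hst'2 : s = t'
    · exact ⟨hst'2, hts'⟩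
    · exfalso
      rw [if_neg hst'2, if_neg htt'] at h2
      norm_num at h2

lemma prime_X_sub_X {σ k : Type*} [Field k] {s t : σ} (h : s ≠ t) :
    Prime (X s - X t : MvPolynomial σ k) := by
  classical
  let Φ : MvPolynomial σ k ≃ₐ[k] Polynomial (MvPolynomial {b : σ // b ≠ s} k) :=
    (renameEquiv k (Equiv.optionSubtypeNe s).symm).trans (optionEquivLeft k _)
  have hΦ : Φ (X s - X t) = Polynomial.X - Polynomial.C (X ⟨t, Ne.symm h⟩) := by
    simp only [Φ, AlgEquiv.trans_apply, map_sub, renameEquiv_apply, rename_X]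
    rw [Equiv.optionSubtypeNe_symm_self s, Equiv.optionSubtypeNe_symm_of_ne (Ne.symm h)]
    rw [optionEquivLeft_X_none, optionEquivLeft_X_some]
  have hp : Prime (Φ (X s - X t)) := by rw [hΦ]; exact Polynomial.prime_X_sub_C _
  exact (MulEquiv.prime_iff Φ).mp hp

lemma dvd_prod_sub_prod {R ι : Type*} [CommRing R] {d : R} (s : Finset ι) (f g : ι → R)
    (h : ∀ i ∈ s, d ∣ f i - g i) : d ∣ (∏ i ∈ s, f i) - ∏ i ∈ s, g i := by
  classical
  induction s using Finset.induction_on with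
  | empty => simp
  | insert _ _ hx ih =>
    rw [Finset.prod_insert hx, Finset.prod_insert hx]
    exact dvd_mul_sub_mul (h _ (Finset.mem_insert_self _ _))
      (ih fun i hi => h i (Finset.mem_insert_of_mem hi))

lemma main_lemma {k : Type*} [Field k] [CharZero k] {n : ℕ}
    (a : Fin n → ℤ) (hsum : ∑ i, a i = 0)
    (H : ∀ p : ℕ, p.Prime → ∃ i, ¬ (p:ℤ) ∣ a i)
    (j : Fin n) (hja : 0 < a j) (hodd : Odd (a j)) :
    ∃ G : MvPolynomial (Fin (n + 2)) k,
      Fpoly k n a = (X (⟨n, by omega⟩ : Fin (n + 2)) - X (⟨n + 1, by omega⟩ : Fin (n + 2))) * G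
        ∧ Irreducible G := by
  classical
  set N : Fin (n + 2) := ⟨n, by omega⟩ with hN
  set N1 : Fin (n + 2) := ⟨n + 1, by omega⟩ with hN1
  have hNN1 : N ≠ N1 := by simp [hN, hN1, Fin.ext_iff]
  -- divisibility
  have hdvd : (X N - X N1 : MvPolynomial (Fin (n + 2)) k) ∣ Fpoly k n a := by
    have key : ∀ γ : Fin n → ℕ,
        (X N - X N1 : MvPolynomial (Fin (n + 2)) k) ∣
          (∏ i, (X N - X (Fin.castAdd 2 i)) ^ γ i) - ∏ i, (X N1 - X (Fin.castAdd 2 i)) ^ γ i := by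
      intro γ
      refine dvd_prod_sub_prod _ _ _ ?_
      intro i _
      have h := sub_dvd_pow_sub_pow (X N - X (Fin.castAdd 2 i) : MvPolynomial (Fin (n + 2)) k)
        (X N1 - X (Fin.castAdd 2 i)) (γ i)
      have e : (X N - X (Fin.castAdd 2 i) : MvPolynomial (Fin (n + 2)) k)
          - (X N1 - X (Fin.castAdd 2 i)) = X N - X N1 := by ring
      rwa [e] at h
    have h1 := key fun i => (a i).toNat
    have h2 := key fun i => (-a i).toNat
    rw [dvd_sub_comm] at h2
    have h3 := dvd_mul_sub_mul h1 h2
    have e : (∏ i, (X N - X (Fin.castAdd 2 i) : MvPolynomial (Fin (n + 2)) k) ^ (a i).toNat) *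
          ((∏ i, (X N1 - X (Fin.castAdd 2 i)) ^ (-a i).toNat))
        - (∏ i, (X N1 - X (Fin.castAdd 2 i)) ^ (a i).toNat) *
          (∏ i, (X N - X (Fin.castAdd 2 i)) ^ (-a i).toNat) = Fpoly k n a := by
      rw [Fpoly]; ring
    rwa [e] at h3
  obtain ⟨G, hG⟩ := hdvd
  refine ⟨G, hG, ?_⟩
  -- setup of the one-variable picture
  set j' : Fin (n + 2) := Fin.castAdd 2 j with hj'
  have hj'val : (j' : ℕ) = (j : ℕ) := rfl
  have hjlt : (j : ℕ) < n := j.isLt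
  have hNj : N ≠ j' := by
    intro h
    have h2 : (n : ℕ) = (j : ℕ) := congrArg Fin.val h
    omega
  have hN1j : N1 ≠ j' := by
    intro h
    have h2 : (n + 1 : ℕ) = (j : ℕ) := congrArg Fin.val h
    omega
  have hcastne : ∀ i : Fin n, i ≠ j → Fin.castAdd 2 i ≠ j' := by
    intro i hij h
    exact hij (Fin.ext (by simpa [hj'val] using congrArg Fin.val h))
  let S := {t : Fin (n + 2) // t ≠ j'}
  let B := MvPolynomial S k
  let Φ : MvPolynomial (Fin (n + 2)) k ≃ₐ[k] Polynomial B :=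
    (renameEquiv k (Equiv.optionSubtypeNe j').symm).trans (optionEquivLeft k S)
  have ΦX : ∀ (t : Fin (n + 2)) (h : t ≠ j'), Φ (X t) = Polynomial.C (X ⟨t, h⟩) := by
    intro t h
    simp only [Φ, AlgEquiv.trans_apply, renameEquiv_apply, rename_X]
    rw [Equiv.optionSubtypeNe_symm_of_ne h, optionEquivLeft_X_some]
  have ΦXj : Φ (X j') = Polynomial.X := by
    simp only [Φ, AlgEquiv.trans_apply, renameEquiv_apply, rename_X]
    rw [Equiv.optionSubtypeNe_symm_self, optionEquivLeft_X_none]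
  set α : Fin n → ℕ := fun i => (a i).toNat with hα
  set β : Fin n → ℕ := fun i => (-a i).toNat with hβ
  set m : ℕ := α j with hm
  have hβj : β j = 0 := by simp only [hβ]; omega
  have hm0 : m ≠ 0 := by simp only [hm, hα]; omega
  set x : B := X ⟨N, hNj⟩ with hx
  set y : B := X ⟨N1, hN1j⟩ with hy
  set P : Fin n → B := fun i =>
    if h : Fin.castAdd 2 i = j' then 0 else X ⟨Fin.castAdd 2 i, h⟩ with hP
  have hPX : ∀ (i : Fin n) (hij : i ≠ j), P i = X ⟨Fin.castAdd 2 i, hcastne i hij⟩ := by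
    intro i hij
    simp only [hP]
    rw [dif_neg (hcastne i hij)]
  set u : B := (∏ i ∈ Finset.univ.erase j, (x - P i) ^ α i) *
      ∏ i ∈ Finset.univ.erase j, (y - P i) ^ β i with hu
  set v : B := (∏ i ∈ Finset.univ.erase j, (x - P i) ^ β i) *
      ∏ i ∈ Finset.univ.erase j, (y - P i) ^ α i with hv
  -- the image of a product under Φ
  have hprod : ∀ (w : Fin (n + 2)) (hw : w ≠ j') (γ : Fin n → ℕ),
      Φ (∏ i, (X w - X (Fin.castAdd 2 i)) ^ γ i)
        = (Polynomial.C (X ⟨w, hw⟩) - Polynomial.X) ^ γ j *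
            Polynomial.C (∏ i ∈ Finset.univ.erase j, (X ⟨w, hw⟩ - P i) ^ γ i) := by
    intro w hw γ
    rw [map_prod, ← Finset.mul_prod_erase Finset.univ _ (Finset.mem_univ j)]
    congr 1
    · rw [map_pow, map_sub, ΦX w hw, ← hj', ΦXj]
    · rw [map_prod]
      refine Finset.prod_congr rfl ?_
      intro i hi
      have hij : i ≠ j := (Finset.mem_erase.mp hi).1
      rw [map_pow, map_sub, ΦX w hw, ΦX _ (hcastne i hij), map_pow, map_sub, hPX i hij]
  have hΦF : Φ (Fpoly k n a) = Polynomial.C u * (Polynomial.C x - Polynomial.X) ^ m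
      - Polynomial.C v * (Polynomial.C y - Polynomial.X) ^ m := by
    rw [Fpoly, map_sub, map_mul, map_mul, hprod N hNj, hprod N1 hN1j, hprod N hNj,
      hprod N1 hN1j]
    have h0 : (-a j).toNat = 0 := by omega
    simp only [hu, hv, hm, hα, hβ, hx, hy, h0, pow_zero, map_mul]
    ring
  -- evaluation point
  set z0 : S → k := fun s => if (s : Fin (n + 2)) = N then 1 else
    if (s : Fin (n + 2)) = N1 then 2 else 0 with hz0
  have heval_x : eval z0 x = 1 := by simp [hx, hz0]
  have heval_y : eval z0 y = 2 := by
    have hne : N1 ≠ N := fun h => hNN1 h.symm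
    simp [hy, hz0, hne]
  have hcastN : ∀ i : Fin n, (Fin.castAdd 2 i : Fin (n + 2)) ≠ N := by
    intro i h
    have h2 := congrArg Fin.val h
    simp [hN] at h2
    omega
  have hcastN1 : ∀ i : Fin n, (Fin.castAdd 2 i : Fin (n + 2)) ≠ N1 := by
    intro i h
    have h2 := congrArg Fin.val h
    simp [hN1] at h2
    omega
  have heval_P : ∀ (i : Fin n) (hij : i ≠ j), eval z0 (P i) = 0 := by
    intro i hij
    rw [hPX i hij]
    simp [hz0, hcastN i, hcastN1 i]
  have hprodx : ∀ γ : Fin n → ℕ, eval z0 (∏ i ∈ Finset.univ.erase j, (x - P i) ^ γ i) = 1 := by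
    intro γ
    rw [map_prod]
    refine Finset.prod_eq_one ?_
    intro i hi
    rw [map_pow, map_sub, heval_x, heval_P i (Finset.mem_erase.mp hi).1]
    simp
  have hprody : ∀ γ : Fin n → ℕ, eval z0 (∏ i ∈ Finset.univ.erase j, (y - P i) ^ γ i)
      = 2 ^ (∑ i ∈ Finset.univ.erase j, γ i) := by
    intro γ
    rw [map_prod]
    rw [Finset.prod_congr rfl (fun i hi => by
      rw [map_pow, map_sub, heval_y, heval_P i (Finset.mem_erase.mp hi).1, sub_zero])]
    rw [Finset.prod_pow_eq_pow_sum]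
  set sα : ℕ := ∑ i ∈ Finset.univ.erase j, α i with hsα
  set sβ : ℕ := ∑ i ∈ Finset.univ.erase j, β i with hsβ
  have heval_u : eval z0 u = 2 ^ sβ := by rw [hu, map_mul, hprodx, hprody, one_mul]
  have heval_v : eval z0 v = 2 ^ sα := by rw [hv, map_mul, hprodx, hprody, one_mul]
  -- sums
  have hsums : sβ = sα + m := by
    have hsum_ab : ∀ i : Fin n, (α i : ℤ) - (β i : ℤ) = a i := by
      intro i
      simp only [hα, hβ]
      omega
    have h1 : ∑ i, ((α i : ℤ) - (β i : ℤ)) = 0 := by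
      rw [Finset.sum_congr rfl (fun i _ => hsum_ab i)]
      exact hsum
    rw [Finset.sum_sub_distrib] at h1
    have h2 : ((∑ i, α i : ℕ) : ℤ) = ((∑ i, β i : ℕ) : ℤ) := by
      push_cast
      linarith
    have hdα : (∑ i, α i) = m + sα := by
      rw [hm, hsα, Finset.add_sum_erase _ α (Finset.mem_univ j)]
    have hdβ : (∑ i, β i) = sβ := by
      rw [hsβ, ← Finset.add_sum_erase _ β (Finset.mem_univ j), hβj, zero_add]
    rw [hdα, hdβ] at h2
    omega
  have h2ne : (2 : k) ≠ 0 := two_ne_zero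
  have hu0 : u ≠ 0 := by
    intro h
    rw [h, map_zero] at heval_u
    exact (pow_ne_zero _ h2ne) heval_u.symm
  have hv0 : v ≠ 0 := by
    intro h
    rw [h, map_zero] at heval_v
    exact (pow_ne_zero _ h2ne) heval_v.symm
  have huv : u ≠ v := by
    intro h
    rw [h, heval_v] at heval_u
    have h3 : ((2 ^ sα : ℕ) : k) = ((2 ^ sβ : ℕ) : k) := by
      push_cast
      rw [heval_u]
    have h4 : (2 : ℕ) ^ sα = 2 ^ sβ := Nat.cast_injective h3
    have h5 : sα = sβ := Nat.pow_right_injective (le_refl 2) h4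
    omega
  have hxy0 : x - y ≠ 0 := by
    intro h
    have h2 := congrArg (eval z0) h
    rw [map_sub, heval_x, heval_y, map_zero] at h2
    norm_num at h2
  -- misc facts
  have hoddm : Odd m := by
    have h := hodd
    rw [← Int.toNat_of_nonneg hja.le] at h
    rw [Int.odd_coe_nat] at h
    simpa only [hm, hα] using h
  have hmunit : IsUnit ((m : B)) := by
    have h1 : IsUnit ((m : k)) := isUnit_iff_ne_zero.mpr (Nat.cast_ne_zero.mpr hm0)
    have h2 := h1.map (MvPolynomial.C (σ := S))
    simpa using h2
  -- prime linear forms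
  have hxP_ne : ∀ (i : Fin n) (hij : i ≠ j),
      (⟨N, hNj⟩ : S) ≠ ⟨Fin.castAdd 2 i, hcastne i hij⟩ :=
    fun i hij h => hcastN i ((Subtype.ext_iff.mp h).symm)
  have hyP_ne : ∀ (i : Fin n) (hij : i ≠ j),
      (⟨N1, hN1j⟩ : S) ≠ ⟨Fin.castAdd 2 i, hcastne i hij⟩ :=
    fun i hij h => hcastN1 i ((Subtype.ext_iff.mp h).symm)
  have hprime_xP : ∀ (i : Fin n) (hij : i ≠ j), Prime (x - P i) := by
    intro i hij
    rw [hx, hPX i hij]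
    exact prime_X_sub_X (hxP_ne i hij)
  have hprime_yP : ∀ (i : Fin n) (hij : i ≠ j), Prime (y - P i) := by
    intro i hij
    rw [hy, hPX i hij]
    exact prime_X_sub_X (hyP_ne i hij)
  -- classification of associated linear forms
  have hassoc_class : ∀ (w w' : Fin (n + 2)) (hw : w ≠ j') (hw' : w' ≠ j')
      (hwb : n ≤ (w : ℕ)) (hw'b : n ≤ (w' : ℕ)) (i l : Fin n) (hij : i ≠ j) (hlj : l ≠ j),
      Associated (X ⟨w, hw⟩ - P i : B) (X ⟨w', hw'⟩ - P l) → w = w' ∧ i = l := by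
    intro w w' hw hw' hwb hw'b i l hij hlj hA
    rw [hPX i hij, hPX l hlj] at hA
    have hst' : (⟨w', hw'⟩ : S) ≠ ⟨Fin.castAdd 2 l, hcastne l hlj⟩ := by
      intro h
      have h2 := congrArg Fin.val (Subtype.ext_iff.mp h)
      simp at h2
      omega
    rcases assoc_lin hst' hA with ⟨h1, h2⟩ | ⟨h1, h2⟩
    · refine ⟨Subtype.ext_iff.mp h1, ?_⟩
      have h3 := congrArg Fin.val (Subtype.ext_iff.mp h2)
      simp at h3
      exact Fin.ext h3
    · exfalso
      have h3 := congrArg Fin.val (Subtype.ext_iff.mp h1)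
      simp at h3
      omega
  -- coprimality of u and v
  have hcop : ∀ q : B, q ∣ u → q ∣ v → IsUnit q := by
    intro q hqu hqv
    by_contra hq
    have hq0 : q ≠ 0 := by
      rintro rfl
      exact hu0 (zero_dvd_iff.mp hqu)
    obtain ⟨π, hπirr, hπq⟩ := WfDvdMonoid.exists_irreducible_factor hq hq0
    have hπ : Prime π := UniqueFactorizationMonoid.irreducible_iff_prime.mp hπirr
    have extract : ∀ γ δ : Fin n → ℕ,
        π ∣ (∏ i ∈ Finset.univ.erase j, (x - P i) ^ γ i) *
            (∏ i ∈ Finset.univ.erase j, (y - P i) ^ δ i) →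
        ∃ i, i ≠ j ∧ ((γ i ≠ 0 ∧ π ∣ (x - P i)) ∨ (δ i ≠ 0 ∧ π ∣ (y - P i))) := by
      intro γ δ hd
      rcases hπ.dvd_mul.mp hd with h | h
      · obtain ⟨i, hi, hdi⟩ := (Prime.dvd_finset_prod_iff hπ _).mp h
        have hij := (Finset.mem_erase.mp hi).1
        have hγ : γ i ≠ 0 := by
          rintro h0
          rw [h0, pow_zero] at hdi
          exact hπ.not_unit (isUnit_of_dvd_one hdi)
        exact ⟨i, hij, Or.inl ⟨hγ, hπ.dvd_of_dvd_pow hdi⟩⟩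
      · obtain ⟨i, hi, hdi⟩ := (Prime.dvd_finset_prod_iff hπ _).mp h
        have hij := (Finset.mem_erase.mp hi).1
        have hδ : δ i ≠ 0 := by
          rintro h0
          rw [h0, pow_zero] at hdi
          exact hπ.not_unit (isUnit_of_dvd_one hdi)
        exact ⟨i, hij, Or.inr ⟨hδ, hπ.dvd_of_dvd_pow hdi⟩⟩
    have hπu : π ∣ u := hπq.trans hqu
    have hπv : π ∣ v := hπq.trans hqv
    rw [hu] at hπu
    rw [hv] at hπv
    obtain ⟨i, hij, hci⟩ := extract α β hπu
    obtain ⟨l, hlj, hcl⟩ := extract β α hπv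
    have hNb : n ≤ (N : ℕ) := by simp [hN]
    have hN1b : n ≤ (N1 : ℕ) := by simp [hN1]
    rcases hci with ⟨hαi, hdx⟩ | ⟨hβi, hdy⟩ <;> rcases hcl with ⟨hβl, hdx'⟩ | ⟨hαl, hdy'⟩
    · have hA1 := hπirr.associated_of_dvd (hprime_xP i hij).irreducible hdx
      have hA2 := hπirr.associated_of_dvd (hprime_xP l hlj).irreducible hdx'
      obtain ⟨-, hil⟩ := hassoc_class N N hNj hNj hNb hNb i l hij hlj
        (by rw [← hx]; exact hA1.symm.trans hA2)
      rw [hil] at hαi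
      simp only [hα, hβ] at hαi hβl
      omega
    · have hA1 := hπirr.associated_of_dvd (hprime_xP i hij).irreducible hdx
      have hA2 := hπirr.associated_of_dvd (hprime_yP l hlj).irreducible hdy'
      obtain ⟨hc, -⟩ := hassoc_class N N1 hNj hN1j hNb hN1b i l hij hlj
        (by rw [← hx, ← hy]; exact hA1.symm.trans hA2)
      exact hNN1 hc
    · have hA1 := hπirr.associated_of_dvd (hprime_yP i hij).irreducible hdy
      have hA2 := hπirr.associated_of_dvd (hprime_xP l hlj).irreducible hdx'
      obtain ⟨hc, -⟩ := hassoc_class N1 N hN1j hNj hN1b hNb i l hij hlj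
        (by rw [← hx, ← hy]; exact hA1.symm.trans hA2)
      exact hNN1 hc.symm
    · have hA1 := hπirr.associated_of_dvd (hprime_yP i hij).irreducible hdy
      have hA2 := hπirr.associated_of_dvd (hprime_yP l hlj).irreducible hdy'
      obtain ⟨-, hil⟩ := hassoc_class N1 N1 hN1j hN1j hN1b hN1b i l hij hlj
        (by rw [← hy]; exact hA1.symm.trans hA2)
      rw [hil] at hβi
      simp only [hα, hβ] at hβi hαl
      omega
  -- valuation argument
  letI : NormalizationMonoid B := UniqueFactorizationMonoid.normalizationMonoid.toNormalizationMonoid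
  have hNb : n ≤ (N : ℕ) := by simp [hN]
  have hN1b : n ≤ (N1 : ℕ) := by simp [hN1]
  have hpow : ∀ p : ℕ, p.Prime → p ∣ m → ∀ s t : B, t ≠ 0 → s ^ p * u ≠ t ^ p * v := by
    intro p hp hpm s t ht heq
    obtain ⟨i0, hi0⟩ := H p hp
    have hpj : (p : ℤ) ∣ a j := by
      have h1 : ((m : ℕ) : ℤ) = a j := by simp only [hm, hα]; omega
      rw [← h1]
      exact_mod_cast Int.natCast_dvd_natCast.mpr hpm
    have hi0j : i0 ≠ j := by rintro rfl; exact hi0 hpj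
    set π : B := x - P i0 with hπdef
    have hπ : Prime π := hprime_xP i0 hi0j
    set ord : B → ℕ := fun z => Multiset.count (normalize π)
      (UniqueFactorizationMonoid.normalizedFactors z) with hord
    have hordmul : ∀ z w : B, z ≠ 0 → w ≠ 0 → ord (z * w) = ord z + ord w := by
      intro z w hz hw
      simp only [hord]
      rw [UniqueFactorizationMonoid.normalizedFactors_mul hz hw, Multiset.count_add]
    have hordpow : ∀ (z : B) (e : ℕ), ord (z ^ e) = e * ord z := by
      intro z e
      simp only [hord]
      rw [UniqueFactorizationMonoid.normalizedFactors_pow, Multiset.count_nsmul]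
    have hordirr : ∀ q : B, Irreducible q → ord q = if Associated π q then 1 else 0 := by
      intro q hq
      simp only [hord]
      rw [UniqueFactorizationMonoid.normalizedFactors_irreducible hq, Multiset.count_singleton]
      by_cases hA : Associated π q
      · rw [if_pos hA, if_pos (normalize_eq_normalize_iff.mpr (dvd_dvd_iff_associated.mpr hA))]
      · rw [if_neg hA, if_neg]
        intro h
        exact hA (dvd_dvd_iff_associated.mp (normalize_eq_normalize_iff.mp h))
    have hordprod : ∀ (sfin : Finset (Fin n)) (f : Fin n → B), (∀ i ∈ sfin, f i ≠ 0) →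
        ord (∏ i ∈ sfin, f i) = ∑ i ∈ sfin, ord (f i) := by
      intro sfin f
      induction sfin using Finset.induction_on with
      | empty =>
        intro _
        simp [hord, UniqueFactorizationMonoid.normalizedFactors_one]
      | @insert b sfin' hb ih =>
        intro hf
        rw [Finset.prod_insert hb, Finset.sum_insert hb,
          hordmul _ _ (hf _ (Finset.mem_insert_self _ _))
            (Finset.prod_ne_zero_iff.mpr fun i hi => hf i (Finset.mem_insert_of_mem hi)),
          ih fun i hi => hf i (Finset.mem_insert_of_mem hi)]
    have hord_x : ∀ (i : Fin n) (hij : i ≠ j), ord (x - P i) = if i = i0 then 1 else 0 := by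
      intro i hij
      rw [hordirr _ (hprime_xP i hij).irreducible]
      by_cases hii : i = i0
      · rw [if_pos hii, if_pos (by rw [hπdef, hii])]
      · rw [if_neg hii, if_neg]
        intro hA
        rw [hπdef] at hA
        obtain ⟨-, h2⟩ := hassoc_class N N hNj hNj hNb hNb i0 i hi0j hij
          (by rw [← hx]; exact hA)
        exact hii h2.symm
    have hord_y : ∀ (i : Fin n) (hij : i ≠ j), ord (y - P i) = 0 := by
      intro i hij
      rw [hordirr _ (hprime_yP i hij).irreducible, if_neg]
      intro hA
      rw [hπdef] at hA
      obtain ⟨hc, -⟩ := hassoc_class N N1 hNj hN1j hNb hN1b i0 i hi0j hij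
        (by rw [← hx, ← hy]; exact hA)
      exact hNN1 hc
    have hfacx : ∀ γ : Fin n → ℕ, ∀ i ∈ Finset.univ.erase j, (x - P i) ^ γ i ≠ 0 := fun γ i hi =>
      pow_ne_zero _ (hprime_xP i (Finset.mem_erase.mp hi).1).ne_zero
    have hfacy : ∀ γ : Fin n → ℕ, ∀ i ∈ Finset.univ.erase j, (y - P i) ^ γ i ≠ 0 := fun γ i hi =>
      pow_ne_zero _ (hprime_yP i (Finset.mem_erase.mp hi).1).ne_zero
    have hi0mem : i0 ∈ Finset.univ.erase j := Finset.mem_erase.mpr ⟨hi0j, Finset.mem_univ _⟩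
    have hsum_x : ∀ γ : Fin n → ℕ,
        ord (∏ i ∈ Finset.univ.erase j, (x - P i) ^ γ i) = γ i0 := by
      intro γ
      rw [hordprod _ _ (hfacx γ)]
      rw [Finset.sum_congr rfl (fun i hi => by
        rw [hordpow, hord_x i (Finset.mem_erase.mp hi).1, mul_ite, mul_one, mul_zero])]
      rw [Finset.sum_ite_eq' (Finset.univ.erase j) i0 γ, if_pos hi0mem]
    have hsum_y : ∀ γ : Fin n → ℕ,
        ord (∏ i ∈ Finset.univ.erase j, (y - P i) ^ γ i) = 0 := by
      intro γ
      rw [hordprod _ _ (hfacy γ)]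
      refine Finset.sum_eq_zero ?_
      intro i hi
      rw [hordpow, hord_y i (Finset.mem_erase.mp hi).1, mul_zero]
    have hord_u : ord u = α i0 := by
      rw [hu, hordmul _ _ (Finset.prod_ne_zero_iff.mpr (hfacx α)) 
        (Finset.prod_ne_zero_iff.mpr (hfacy β)), hsum_x, hsum_y, add_zero]
    have hord_v : ord v = β i0 := by
      rw [hv, hordmul _ _ (Finset.prod_ne_zero_iff.mpr (hfacx β)) 
        (Finset.prod_ne_zero_iff.mpr (hfacy α)), hsum_x, hsum_y, add_zero]
    have hs0 : s ≠ 0 := by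
      rintro rfl
      rw [zero_pow hp.ne_zero, zero_mul] at heq
      exact (mul_ne_zero (pow_ne_zero _ ht) hv0) heq.symm
    have h1 : ord (s ^ p * u) = ord (t ^ p * v) := by rw [heq]
    rw [hordmul _ _ (pow_ne_zero _ hs0) hu0, hordmul _ _ (pow_ne_zero _ ht) hv0,
      hordpow, hordpow, hord_u, hord_v] at h1
    refine hi0 ⟨(ord t : ℤ) - (ord s : ℤ), ?_⟩
    have hab : (α i0 : ℤ) - (β i0 : ℤ) = a i0 := by simp only [hα, hβ]; omega
    have h2 : (p : ℤ) * (ord s : ℤ) + (α i0 : ℤ) = (p : ℤ) * (ord t : ℤ) + (β i0 : ℤ) := by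
      exact_mod_cast h1
    linarith
  -- conclusion
  have hΦD : Φ (X N - X N1) = Polynomial.C (x - y) := by
    rw [map_sub, ΦX N hNj, ΦX N1 hN1j, ← hx, ← hy, ← map_sub]
  have hnegpow : ∀ w : B, (Polynomial.C w - Polynomial.X) ^ m
      = -((Polynomial.X - Polynomial.C w) ^ m) := by
    intro w
    rw [show (Polynomial.C w - Polynomial.X : Polynomial B) = -(Polynomial.X - Polynomial.C w)
      from (neg_sub _ _).symm]
    exact hoddm.neg_pow (Polynomial.X - Polynomial.C w)
  have hsign : Polynomial.C (x - y) * (-(Φ G))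
      = Polynomial.C u * (Polynomial.X - Polynomial.C x) ^ m
        - Polynomial.C v * (Polynomial.X - Polynomial.C y) ^ m := by
    have hFG : Φ (Fpoly k n a) = Polynomial.C (x - y) * Φ G := by rw [hG, map_mul, hΦD]
    have h2 : Polynomial.C (x - y) * (-(Φ G)) = -(Φ (Fpoly k n a)) := by rw [hFG]; ring
    rw [h2, hΦF, hnegpow x, hnegpow y]
    ring
  have hG' : Irreducible (-(Φ G)) :=
    core_lemma hxy0 hu0 hv0 huv hm0 hmunit hoddm hcop hpow hsign
  have hGΦ : Irreducible (Φ G) := by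
    have hA : Associated (-(Φ G)) (Φ G) := ⟨-1, by simp⟩
    exact hA.irreducible hG'
  exact (MulEquiv.irreducible_iff Φ).mp hGΦ

/-- over an algebraically closed field of characteristic zero,
`F` is divisible by `p_{n+1} − p_{n+2}` and the quotient
`G = F / (p_{n+1} − p_{n+2})` is irreducible. -/
theorem stmt_13 {k : Type*} [Field k] [IsAlgClosed k] [CharZero k] {n : ℕ} (hn : 3 ≤ n)
    (a : Fin n → ℤ) (hsum : ∑ i, a i = 0) (hgcd : Finset.univ.gcd a = 1)
    (hnz : ∀ i, a i ≠ 0) :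
    ∃ G : MvPolynomial (Fin (n + 2)) k,
      Fpoly k n a =
        (X (⟨n, by omega⟩ : Fin (n + 2)) - X (⟨n + 1, by omega⟩ : Fin (n + 2))) * G ∧
      Irreducible G := by
  have H : ∀ p : ℕ, p.Prime → ∃ i, ¬ (p : ℤ) ∣ a i := by
    intro p hp
    by_contra hc
    push_neg at hc
    have hdvd : (p : ℤ) ∣ Finset.univ.gcd a := Finset.dvd_gcd fun i _ => hc i
    rw [hgcd] at hdvd
    have hple : (p : ℤ) ≤ 1 := Int.le_of_dvd one_pos hdvd
    have := hp.two_le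
    omega
  obtain ⟨j, hj⟩ := H 2 Nat.prime_two
  have hjodd : Odd (a j) := by
    rw [Int.odd_iff]
    omega
  rcases lt_trichotomy (a j) 0 with hneg | hzero | hpos
  · have hbsum : ∑ i, (fun i => -a i) i = 0 := by
      simp only []
      rw [Finset.sum_neg_distrib, hsum, neg_zero]
    have hbH : ∀ p : ℕ, p.Prime → ∃ i, ¬ (p : ℤ) ∣ (fun i => -a i) i := by
      intro p hp
      obtain ⟨i, hi⟩ := H p hp
      exact ⟨i, fun h => hi (dvd_neg.mp h)⟩
    obtain ⟨G, hG, hGirr⟩ := main_lemma (k := k) (fun i => -a i) hbsum hbH j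
      (by show 0 < -a j; omega) (by show Odd (-a j); exact hjodd.neg)
    refine ⟨-G, ?_, ?_⟩
    · have hFb : Fpoly k n (fun i => -a i) = -Fpoly k n a := by
        rw [Fpoly, Fpoly]
        simp only [neg_neg]
        ring
      rw [hFb] at hG
      linear_combination -hG
    · have hA : Associated G (-G) := ⟨-1, by simp⟩
      exact hA.irreducible hGirr
  · exact absurd hzero (hnz j)
  · exact main_lemma a hsum H j hpos hjodd
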